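/- In Setup A, assume additionally that Σ_{k=1}^{n'} a_k/r_k ≥ 1/r_{n+1}. Let S, S' ⊆ {1,…,n} be subsets containing {1,…,n'}, with integer families t = (t_i)_{i∈S} and t' = (t'_i)_{i∈S'}. If U(S,t) ⊆ U(S',t'), then F(S,t) ⊆ F(S',t'). -/

import Mathlib

open scoped RealInnerProductSpace BigOperators

noncomputable section

/-- Euclidean space `ℝⁿ` with the standard inner product. -/
abbrev E (n : ℕ) : Type := EuclideanSpace ℝ (Fin n)

/-- The index set `I' = {1,…,n'}` inside `{1,…,n}`. -/
def IprimeA (n n' : ℕ) : Finset (Fin n) := Finset.univ.filter fun i => i.val < n'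

/-- `v_{n+1} := a₁ v₁ + ⋯ + a_{n'} v_{n'}`. -/
def vLast (n n' : ℕ) (a : Fin n → ℚ) (v : Fin n → E n) : E n :=
  ∑ i ∈ IprimeA n n', (a i : ℝ) • v i

/-- `U(S,t) := {x ∈ ℝⁿ : ⟨x, v_i⟩ > t_i/r_i for all i ∈ S}`. -/
def USet (n : ℕ) (v : Fin n → E n) (r : Fin n → ℤ) (S : Finset (Fin n))
    (t : Fin n → ℤ) : Set (E n) :=
  {x | ∀ i ∈ S, ((t i : ℝ) / (r i : ℝ)) < ⟪x, v i⟫}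

/-- `t_{n+1}(t) := ⌈r_{n+1} · Σ_{k=1}^{n'} a_k t_k / r_k⌉`. -/
def tLast (n n' : ℕ) (a : Fin n → ℚ) (r : Fin n → ℤ) (rl : ℤ) (t : Fin n → ℤ) : ℤ :=
  ⌈(rl : ℚ) * ∑ k ∈ IprimeA n n', a k * (t k : ℚ) / (r k : ℚ)⌉

/-- `F(S,t) := {x ∈ U(S,t) : ⟨x, v_{n+1}⟩ > t_{n+1}(t)/r_{n+1}}`. -/
def FSetA (n n' : ℕ) (a : Fin n → ℚ) (v : Fin n → E n) (r : Fin n → ℤ) (rl : ℤ)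
    (S : Finset (Fin n)) (t : Fin n → ℤ) : Set (E n) :=
  {x | x ∈ USet n v r S t ∧
    ((tLast n n' a r rl t : ℝ) / (rl : ℝ)) < ⟪x, vLast n n' a v⟫}

lemma exists_inner_eq (n : ℕ) (v : Fin n → E n) (hv : LinearIndependent ℝ v)
    (y : Fin n → ℝ) : ∃ x : E n, ∀ i, ⟪x, v i⟫ = y i := by
  classical
  set L : E n →ₗ[ℝ] (Fin n → ℝ) :=
    { toFun := fun x i => ⟪x, v i⟫
      map_add' := fun x y => by funext i; simp [inner_add_left]
      map_smul' := fun c x => by funext i; simp [inner_smul_left] } with hL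
  rcases Nat.eq_zero_or_pos n with hn | hn
  · subst hn
    exact ⟨0, fun i => absurd i.2 (by omega)⟩
  have : Nonempty (Fin n) := ⟨⟨0, hn⟩⟩
  have hsp : Submodule.span ℝ (Set.range v) = ⊤ :=
    hv.span_eq_top_of_card_eq_finrank (by simp)
  have hinj : Function.Injective L := by
    rw [← LinearMap.ker_eq_bot, Submodule.eq_bot_iff]
    intro x hx
    have hx' : ∀ i, ⟪x, v i⟫ = 0 := fun i => congrFun hx i
    have hxmem : x ∈ Submodule.span ℝ (Set.range v) := hsp ▸ Submodule.mem_top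
    have key : ∀ z ∈ Submodule.span ℝ (Set.range v), ⟪x, z⟫ = 0 := by
      intro z hz
      induction hz using Submodule.span_induction with
      | mem u hu => obtain ⟨i, rfl⟩ := hu; exact hx' i
      | zero => exact inner_zero_right x
      | add u w _ _ hu hw => rw [inner_add_right, hu, hw, add_zero]
      | smul c u _ hu => rw [real_inner_smul_right, hu, mul_zero]
    exact inner_self_eq_zero.mp (key x hxmem)
  have hsurj : Function.Surjective L :=
    (LinearMap.injective_iff_surjective_of_finrank_eq_finrank (by simp)).mp hinj
  obtain ⟨x, hx⟩ := hsurj y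
  exact ⟨x, fun i => congrFun hx i⟩

/-- Setup A: assume `Σ_{k=1}^{n'} a_k/r_k ≥ 1/r_{n+1}`.  If
`U(S,t) ⊆ U(S',t')`, then `F(S,t) ⊆ F(S',t')`. -/
theorem stmt1 (n n' : ℕ) (hn'1 : 1 ≤ n') (hn'n : n' ≤ n)
    (v : Fin n → E n) (hv : LinearIndependent ℝ v)
    (a : Fin n → ℚ) (ha : ∀ i : Fin n, i.val < n' → 0 < a i)
    (r : Fin n → ℤ) (hr : ∀ i, 0 < r i) (rl : ℤ) (hrl : 0 < rl)
    (hsum : (1 : ℚ) / (rl : ℚ) ≤ ∑ k ∈ IprimeA n n', a k / (r k : ℚ))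
    (S S' : Finset (Fin n)) (hS : IprimeA n n' ⊆ S) (hS' : IprimeA n n' ⊆ S')
    (t t' : Fin n → ℤ)
    (hU : USet n v r S t ⊆ USet n v r S' t') :
    FSetA n n' a v r rl S t ⊆ FSetA n n' a v r rl S' t' := by
  classical
  -- key componentwise consequence of hU
  have key : ∀ j ∈ S', j ∈ S ∧ ((t' j : ℝ) / (r j : ℝ) ≤ (t j : ℝ) / (r j : ℝ)) := by
    intro j hj
    have hjS : j ∈ S := by
      by_contra hjS
      obtain ⟨x₀, hx₀⟩ := exists_inner_eq n v hv
        (fun i => if i ∈ S then (t i : ℝ) / (r i : ℝ) + 1 else (t' j : ℝ) / (r j : ℝ) - 1)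
      have hmem : x₀ ∈ USet n v r S t := by
        intro i hi
        rw [hx₀ i, if_pos hi]
        linarith
      have := hU hmem j hj
      rw [hx₀ j, if_neg hjS] at this
      linarith
    refine ⟨hjS, ?_⟩
    have hε : ∀ ε : ℝ, 0 < ε → (t' j : ℝ) / (r j : ℝ) < (t j : ℝ) / (r j : ℝ) + ε := by
      intro ε hε
      obtain ⟨x₀, hx₀⟩ := exists_inner_eq n v hv
        (fun i => if i = j then (t j : ℝ) / (r j : ℝ) + ε
          else if i ∈ S then (t i : ℝ) / (r i : ℝ) + 1 else 0)
      have hmem : x₀ ∈ USet n v r S t := by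
        intro i hi
        rw [hx₀ i]
        by_cases h : i = j
        · subst h; rw [if_pos rfl]; linarith
        · rw [if_neg h, if_pos hi]; linarith
      have := hU hmem j hj
      rwa [hx₀ j, if_pos rfl] at this
    exact le_of_forall_pos_lt_add fun ε h => hε ε h
  -- transfer to ℚ and compare sums
  have hQ : ∀ j ∈ S', (t' j : ℚ) / (r j : ℚ) ≤ (t j : ℚ) / (r j : ℚ) := by
    intro j hj
    have := (key j hj).2
    exact_mod_cast this
  have hsums : ∑ k ∈ IprimeA n n', a k * (t' k : ℚ) / (r k : ℚ)
      ≤ ∑ k ∈ IprimeA n n', a k * (t k : ℚ) / (r k : ℚ) := by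
    refine Finset.sum_le_sum fun k hk => ?_
    have hk' : (k : Fin n).val < n' := (Finset.mem_filter.mp hk).2
    have hak : (0 : ℚ) ≤ a k := le_of_lt (ha k hk')
    rw [mul_div_assoc, mul_div_assoc]
    exact mul_le_mul_of_nonneg_left (hQ k (hS' hk)) hak
  have htL : tLast n n' a r rl t' ≤ tLast n n' a r rl t := by
    apply Int.ceil_le_ceil
    apply mul_le_mul_of_nonneg_left hsums
    exact_mod_cast le_of_lt hrl
  -- conclude
  intro x hx
  obtain ⟨hxU, hxF⟩ := hx
  refine ⟨hU hxU, lt_of_le_of_lt ?_ hxF⟩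
  have hrl' : (0 : ℝ) < (rl : ℝ) := by exact_mod_cast hrl
  gcongr
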